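/- Let 𝔤 be a real Lie algebra, 𝔥 a subalgebra, J an 𝔥-invariant integrable complex structure on 𝔤/𝔥, and 𝔩 = p⁻¹((𝔤/𝔥)₊) ⊆ 𝔤_ℂ. Then: (a) 𝔤_ℂ = 𝔤 + 𝔩 (as real vector spaces); (b) 𝔤_ℂ = 𝔩 + τ(𝔩); and (c) 𝔥_ℂ = 𝔩 ∩ τ(𝔩), where τ denotes complex conjugation of 𝔤_ℂ with respect to 𝔤. -/

import Mathlib

open Module TensorProduct

/-- The quotient map `𝔤 → 𝔤/𝔥`. -/
def qmk {L : Type*} [LieRing L] [LieAlgebra ℝ L] (H : LieSubalgebra ℝ L) :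
    L →ₗ[ℝ] L ⧸ H.toSubmodule := H.toSubmodule.mkQ

/-- `J` is integrable: the Nijenhuis bilinear map
`N(u,v) = p[x,y] + J(p[x',y] + p[x,y']) − p[x',y']` vanishes for all lifts. -/
def Integrable {L : Type*} [LieRing L] [LieAlgebra ℝ L] (H : LieSubalgebra ℝ L)
    (J : (L ⧸ H.toSubmodule) →ₗ[ℝ] (L ⧸ H.toSubmodule)) : Prop :=
  ∀ x y x' y' : L, qmk H x' = J (qmk H x) → qmk H y' = J (qmk H y) →
    qmk H ⁅x, y⁆ + J (qmk H ⁅x', y⁆ + qmk H ⁅x, y'⁆) - qmk H ⁅x', y'⁆ = 0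

/-- `𝔩 = p⁻¹((𝔤/𝔥)₊) ⊆ 𝔤_ℂ`: the preimage under the complexified quotient map
`p : 𝔤_ℂ → (𝔤/𝔥)_ℂ` of the `i`-eigenspace of the complexification of `J`. -/
noncomputable def lsub {L : Type*} [LieRing L] [LieAlgebra ℝ L] (H : LieSubalgebra ℝ L)
    (J : (L ⧸ H.toSubmodule) →ₗ[ℝ] (L ⧸ H.toSubmodule)) : Submodule ℂ (ℂ ⊗[ℝ] L) :=
  Submodule.comap ((qmk H).baseChange ℂ)
    (Module.End.eigenspace (J.baseChange ℂ) Complex.I)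


/-- Complex conjugation `τ` on `𝔤_ℂ = ℂ ⊗[ℝ] 𝔤` with respect to `𝔤`. -/
noncomputable def conjTau (L : Type*) [AddCommGroup L] [Module ℝ L] :
    ℂ ⊗[ℝ] L →ₗ[ℝ] ℂ ⊗[ℝ] L :=
  TensorProduct.map Complex.conjAe.toLinearMap LinearMap.id

section helpers

variable {L M : Type*} [AddCommGroup L] [Module ℝ L] [AddCommGroup M] [Module ℝ M]

lemma conjTau_tmul (c : ℂ) (x : L) :
    conjTau L (c ⊗ₜ[ℝ] x) = (starRingEnd ℂ c) ⊗ₜ[ℝ] x := rfl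

lemma conjTau_conjTau (z : ℂ ⊗[ℝ] L) : conjTau L (conjTau L z) = z := by
  induction z using TensorProduct.induction_on with
  | zero => simp
  | tmul c x => simp [conjTau_tmul]
  | add a b ha hb => simp [map_add, ha, hb]

lemma conjTau_smul (c : ℂ) (z : ℂ ⊗[ℝ] L) :
    conjTau L (c • z) = (starRingEnd ℂ c) • conjTau L z := by
  induction z using TensorProduct.induction_on with
  | zero => simp
  | tmul d x => rw [smul_tmul', conjTau_tmul, conjTau_tmul, smul_tmul']; simp
  | add a b ha hb => simp [smul_add, map_add, ha, hb]

lemma conjTau_baseChange (f : L →ₗ[ℝ] M) (z : ℂ ⊗[ℝ] L) :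
    f.baseChange ℂ (conjTau L z) = conjTau M (f.baseChange ℂ z) := by
  induction z using TensorProduct.induction_on with
  | zero => simp
  | tmul c x => simp [conjTau_tmul, LinearMap.baseChange_tmul]
  | add a b ha hb => simp [map_add, ha, hb]

lemma tmul_decomp (c : ℂ) (x : L) :
    c ⊗ₜ[ℝ] x = c.re • ((1:ℂ) ⊗ₜ[ℝ] x) + c.im • (Complex.I ⊗ₜ[ℝ] x) := by
  rw [smul_tmul', smul_tmul', ← add_tmul]
  congr 1
  simp [Complex.real_smul]

end helpers

section key
variable {L : Type*} [LieRing L] [LieAlgebra ℝ L] (H : LieSubalgebra ℝ L)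
    (J : (L ⧸ H.toSubmodule) →ₗ[ℝ] (L ⧸ H.toSubmodule))

lemma mem_lsub_iff (z : ℂ ⊗[ℝ] L) : z ∈ lsub H J ↔
    (J.baseChange ℂ) ((qmk H).baseChange ℂ z) = Complex.I • ((qmk H).baseChange ℂ z) := by
  rw [lsub, Submodule.mem_comap, Module.End.mem_eigenspace_iff]

lemma key_mem (hJ2 : J ∘ₗ J = -LinearMap.id) (x : L) :
    ∃ x' : L, ((1:ℂ) ⊗ₜ[ℝ] x - Complex.I ⊗ₜ[ℝ] x') ∈ lsub H J := by
  have hJJ : ∀ v, J (J v) = -v := fun v => by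
    have := LinearMap.ext_iff.mp hJ2 v
    simpa using this
  obtain ⟨x', hx'⟩ := H.toSubmodule.mkQ_surjective (J (qmk H x))
  refine ⟨x', ?_⟩
  rw [mem_lsub_iff]
  have h1 : (qmk H).baseChange ℂ ((1:ℂ) ⊗ₜ[ℝ] x - Complex.I ⊗ₜ[ℝ] x')
      = (1:ℂ) ⊗ₜ (qmk H x) - Complex.I ⊗ₜ (J (qmk H x)) := by
    rw [map_sub, LinearMap.baseChange_tmul, LinearMap.baseChange_tmul,
      show (qmk H) x' = J (qmk H x) from hx']
  rw [h1, map_sub, LinearMap.baseChange_tmul, LinearMap.baseChange_tmul, hJJ,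
    smul_sub, smul_tmul', smul_tmul']
  simp [Complex.I_mul_I, tmul_neg, neg_tmul]
  abel

end key

/-- with `𝔩 = p⁻¹((𝔤/𝔥)₊)` and `τ` conjugation of `𝔤_ℂ` w.r.t. `𝔤`:
(a) `𝔤_ℂ = 𝔤 + 𝔩`, (b) `𝔤_ℂ = 𝔩 + τ(𝔩)`, (c) `𝔥_ℂ = 𝔩 ∩ τ(𝔩)` (all as real vector spaces). -/
theorem stmt6 {L : Type*} [LieRing L] [LieAlgebra ℝ L] (H : LieSubalgebra ℝ L)
    (J : (L ⧸ H.toSubmodule) →ₗ[ℝ] (L ⧸ H.toSubmodule))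
    (hJ2 : J ∘ₗ J = -LinearMap.id)
    (hinv : ∀ h ∈ H, ∀ x y : L,
      qmk H y = J (qmk H x) → J (qmk H ⁅h, x⁆) = qmk H ⁅h, y⁆)
    (hint : Integrable H J) :
    LinearMap.range (TensorProduct.mk ℝ ℂ L 1) ⊔
        Submodule.restrictScalars ℝ (lsub H J) = ⊤ ∧
      Submodule.restrictScalars ℝ (lsub H J) ⊔
        Submodule.map (conjTau L) (Submodule.restrictScalars ℝ (lsub H J)) = ⊤ ∧
      Submodule.restrictScalars ℝ (lsub H J) ⊓
        Submodule.map (conjTau L) (Submodule.restrictScalars ℝ (lsub H J)) =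
          Submodule.restrictScalars ℝ (Submodule.baseChange ℂ H.toSubmodule) := by
  classical
  -- part (a)
  have hone : ∀ x : L, (1:ℂ) ⊗ₜ[ℝ] x ∈ LinearMap.range (TensorProduct.mk ℝ ℂ L 1) :=
    fun x => ⟨x, rfl⟩
  have ha : LinearMap.range (TensorProduct.mk ℝ ℂ L 1) ⊔
      Submodule.restrictScalars ℝ (lsub H J) = ⊤ := by
    rw [eq_top_iff]
    rintro z -
    induction z using TensorProduct.induction_on with
    | zero => exact zero_mem _
    | tmul c x =>
      obtain ⟨x', hl⟩ := key_mem H J hJ2 x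
      have hIx : Complex.I ⊗ₜ[ℝ] x ∈ LinearMap.range (TensorProduct.mk ℝ ℂ L 1) ⊔
          Submodule.restrictScalars ℝ (lsub H J) := by
        have heq : Complex.I ⊗ₜ[ℝ] x
            = Complex.I • ((1:ℂ) ⊗ₜ[ℝ] x - Complex.I ⊗ₜ[ℝ] x') - (1:ℂ) ⊗ₜ[ℝ] x' := by
          rw [smul_sub, smul_tmul', smul_tmul']
          simp [Complex.I_mul_I, neg_tmul]
        rw [heq]
        exact sub_mem (Submodule.mem_sup_right (Submodule.smul_mem (lsub H J) _ hl))
          (Submodule.mem_sup_left (hone x'))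
      rw [tmul_decomp c x]
      exact add_mem (Submodule.smul_mem _ _ (Submodule.mem_sup_left (hone x)))
        (Submodule.smul_mem _ _ hIx)
    | add a b ha hb => exact add_mem ha hb
  refine ⟨ha, ?_, ?_⟩
  · -- part (b)
    rw [eq_top_iff, ← ha, sup_le_iff]
    constructor
    · rintro z ⟨x, rfl⟩
      obtain ⟨x', hl⟩ := key_mem H J hJ2 x
      have heq : (TensorProduct.mk ℝ ℂ L 1) x
          = (2⁻¹:ℝ) • ((1:ℂ) ⊗ₜ[ℝ] x - Complex.I ⊗ₜ[ℝ] x')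
            + conjTau L ((2⁻¹:ℝ) • ((1:ℂ) ⊗ₜ[ℝ] x - Complex.I ⊗ₜ[ℝ] x')) := by
        rw [map_smul, map_sub, conjTau_tmul, conjTau_tmul]
        simp only [TensorProduct.mk_apply, map_one, Complex.conj_I]
        rw [neg_tmul, sub_neg_eq_add, ← smul_add]
        have : ((1:ℂ) ⊗ₜ[ℝ] x - Complex.I ⊗ₜ[ℝ] x') + ((1:ℂ) ⊗ₜ[ℝ] x + Complex.I ⊗ₜ[ℝ] x')
            = (2:ℝ) • ((1:ℂ) ⊗ₜ[ℝ] x) := by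
          rw [smul_tmul']
          rw [show ((2:ℝ) • (1:ℂ)) = (2:ℂ) by norm_num]
          rw [show ((2:ℂ)) = 1 + 1 by norm_num, add_tmul]
          abel
        rw [this, smul_smul]
        norm_num
      rw [heq]
      exact add_mem (Submodule.mem_sup_left (Submodule.smul_mem _ _ hl))
        (Submodule.mem_sup_right ⟨_, Submodule.smul_mem _ _ hl, rfl⟩)
    · exact le_sup_left
  · -- part (c)
    -- baseChange of H is in the kernel of p
    have hker : ∀ z ∈ Submodule.baseChange ℂ H.toSubmodule, (qmk H).baseChange ℂ z = 0 := by
      intro z hz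
      rw [Submodule.baseChange_eq_span] at hz
      refine Submodule.span_induction (p := fun z _ => (qmk H).baseChange ℂ z = 0) ?_ rfl ?_ ?_ hz
      · rintro w ⟨h, hh, rfl⟩
        have : qmk H h = 0 := (Submodule.Quotient.mk_eq_zero _).mpr hh
        simp [TensorProduct.mk_apply, LinearMap.baseChange_tmul, this]
      · intro a b _ _ hA hB; rw [map_add, hA, hB, add_zero]
      · intro c a _ hA; rw [map_smul, hA, smul_zero]
    have hHl : ∀ z ∈ Submodule.baseChange ℂ H.toSubmodule, z ∈ lsub H J := by
      intro z hz
      rw [mem_lsub_iff, hker z hz]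
      simp
    have hτH : ∀ z ∈ Submodule.baseChange ℂ H.toSubmodule,
        conjTau L z ∈ Submodule.baseChange ℂ H.toSubmodule := by
      intro z hz
      rw [Submodule.baseChange_eq_span] at hz
      refine Submodule.span_induction
        (p := fun z _ => conjTau L z ∈ Submodule.baseChange ℂ H.toSubmodule) ?_ (by simp) ?_ ?_ hz
      · rintro w ⟨h, hh, rfl⟩
        rw [TensorProduct.mk_apply, conjTau_tmul, map_one]
        exact Submodule.tmul_mem_baseChange_of_mem 1 hh
      · intro a b _ _ hA hB; rw [map_add]; exact add_mem hA hB
      · intro c a _ hA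
        rw [conjTau_smul]
        exact Submodule.smul_mem _ _ hA
    refine le_antisymm ?_ ?_
    · rintro z ⟨hz1, w, hw, rfl⟩
      -- z = conjTau L w, both in lsub
      have hz1' : (J.baseChange ℂ) ((qmk H).baseChange ℂ (conjTau L w))
          = Complex.I • ((qmk H).baseChange ℂ (conjTau L w)) := (mem_lsub_iff H J _).mp hz1
      have hw' := (mem_lsub_iff H J w).mp hw
      have hcomm : (qmk H).baseChange ℂ (conjTau L w)
          = conjTau _ ((qmk H).baseChange ℂ w) := conjTau_baseChange _ w
      have h2 : (J.baseChange ℂ) ((qmk H).baseChange ℂ (conjTau L w))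
          = (-Complex.I) • ((qmk H).baseChange ℂ (conjTau L w)) := by
        rw [hcomm, conjTau_baseChange, hw', conjTau_smul]
        simp
      have h3 : (Complex.I - (-Complex.I)) • ((qmk H).baseChange ℂ (conjTau L w)) = 0 := by
        rw [sub_smul, sub_eq_zero]
        exact hz1'.symm.trans h2
      have h4 : (qmk H).baseChange ℂ (conjTau L w) = 0 := by
        rcases smul_eq_zero.mp h3 with h | h
        · exfalso
          rw [sub_neg_eq_add] at h
          simpa [Complex.ext_iff] using h
        · exact h
      -- kernel of baseChange mkQ is baseChange of H
      have hexact := Module.Flat.lTensor_exact ℂ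
        (LinearMap.exact_subtype_mkQ H.toSubmodule)
      have h5 : (H.toSubmodule.mkQ.lTensor ℂ) (conjTau L w) = 0 := by
        have := congrFun (LinearMap.baseChange_eq_ltensor (A := ℂ) (qmk H)) (conjTau L w)
        rw [show (H.toSubmodule.mkQ.lTensor ℂ) (conjTau L w)
            = ((qmk H).lTensor ℂ) (conjTau L w) from rfl, ← this, h4]
      obtain ⟨v, hv⟩ := (hexact (conjTau L w)).mp h5
      rw [← hv]
      clear hv h5
      induction v using TensorProduct.induction_on with
      | zero => simp
      | tmul c h =>
        rw [LinearMap.lTensor_tmul]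
        exact Submodule.tmul_mem_baseChange_of_mem c h.2
      | add a b hA hB => rw [map_add]; exact add_mem hA hB
    · intro z hz
      exact ⟨hHl z hz, conjTau L z, hHl _ (hτH z hz), conjTau_conjTau z⟩
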